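/- Let λ be a nonempty set and σ any automorphism of the semigroup of λ×λ matrix units B_λ. Then there exists a bijection φ : λ → λ such that σ(α, β) = (φ(α), φ(β)) for all α, β ∈ λ, and σ(0) = 0. -/

import Mathlib

/-- The semigroup of `Λ×Λ` matrix units `B_Λ`: its underlying set is
`(Λ × Λ) ∪ {0}`, where `none` plays the role of the zero `0`. -/
def MatrixUnits (Λ : Type*) : Type _ :=
  Option (Λ × Λ)

namespace MatrixUnits

variable {Λ : Type*}

instance : Zero (MatrixUnits Λ) := ⟨none⟩

open Classical in
/-- `(α, β)·(γ, δ) = (α, δ)` if `β = γ`, and `0` otherwise; `0` is a two-sided zero. -/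
noncomputable instance : Mul (MatrixUnits Λ) :=
  ⟨fun x y =>
    match x, y with
    | some (α, β), some (γ, δ) =>
        if β = γ then some (α, δ) else 0
    | _, _ => 0⟩

end MatrixUnits

/-- An automorphism of a semigroup: a bijective map preserving the multiplication. -/
def IsSemigroupAut {T : Type*} [Mul T] (σ : T → T) : Prop :=
  Function.Bijective σ ∧ ∀ x y : T, σ (x * y) = σ x * σ y

namespace MatrixUnits

variable {Λ : Type*}

open Classical in
lemma mul_some_some (a b c d : Λ) :
    @HMul.hMul (MatrixUnits Λ) (MatrixUnits Λ) (MatrixUnits Λ) instHMul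
      (some (a, b)) (some (c, d)) =
      (if b = c then some (a, d) else none : MatrixUnits Λ) := rfl

lemma zero_mul' (x : MatrixUnits Λ) :
    @HMul.hMul (MatrixUnits Λ) (MatrixUnits Λ) (MatrixUnits Λ) instHMul 0 x = 0 := by
  cases x with
  | none => rfl
  | some p => cases p; rfl

lemma mul_zero' (x : MatrixUnits Λ) :
    @HMul.hMul (MatrixUnits Λ) (MatrixUnits Λ) (MatrixUnits Λ) instHMul x 0 = 0 := by
  cases x with
  | none => rfl
  | some p => cases p; rfl

lemma mul_some_some_eq (a b d : Λ) :
    @HMul.hMul (MatrixUnits Λ) (MatrixUnits Λ) (MatrixUnits Λ) instHMul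
      (some (a, b)) (some (b, d)) = (some (a, d) : MatrixUnits Λ) := by
  rw [mul_some_some]
  exact if_pos rfl

end MatrixUnits

open MatrixUnits in
/-- Let `Λ` be a nonempty set and `σ` any automorphism of the semigroup of `Λ×Λ`
matrix units `B_Λ`. Then there exists a bijection `φ : Λ → Λ` such that
`σ(α, β) = (φ(α), φ(β))` for all `α, β ∈ Λ`, and `σ(0) = 0`. -/
theorem stmt_5 {Λ : Type*} [Nonempty Λ]
    (σ : MatrixUnits Λ → MatrixUnits Λ) (hσ : IsSemigroupAut σ) :
    ∃ φ : Λ ≃ Λ, (∀ α β : Λ, σ (some (α, β)) = some (φ α, φ β)) ∧ σ 0 = 0 := by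
  obtain ⟨⟨hinj, hsurj⟩, hmul⟩ := hσ
  have hnone0 : (none : MatrixUnits Λ) = (0 : MatrixUnits Λ) := rfl
  -- σ 0 = 0
  have h0 : σ 0 = 0 := by
    obtain ⟨x, hx⟩ := hsurj 0
    have := hmul 0 x
    rw [zero_mul', hx, mul_zero'] at this
    exact this
  -- σ sends some to some
  have hsome : ∀ p : Λ × Λ, ∃ q : Λ × Λ, σ (some p) = some q := by
    intro p
    cases hq : σ (some p) with
    | none =>
        exfalso
        have : σ (some p) = σ 0 := by rw [hq, h0, hnone0]
        exact Option.some_ne_none p (hinj this)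
    | some q => exact ⟨q, rfl⟩
  choose f hf using hsome
  -- f is injective
  have hfinj : Function.Injective f := by
    intro p q h
    have : σ (some p) = σ (some q) := by rw [hf, hf, h]
    exact Option.some_injective _ (hinj this)
  -- key multiplication fact
  have key : ∀ α β δ : Λ, (f (α, β)).2 = (f (β, δ)).1 := by
    intro α β δ
    have h1 := hmul (some (α, β)) (some (β, δ))
    rw [mul_some_some_eq, hf, hf, hf] at h1
    by_contra h
    rw [show (some (f (α, β)) : MatrixUnits Λ) = some ((f (α,β)).1, (f (α,β)).2) from rfl,
        show (some (f (β, δ)) : MatrixUnits Λ) = some ((f (β,δ)).1, (f (β,δ)).2) from rfl,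
        mul_some_some] at h1
    replace h1 := h1.trans (if_neg h)
    exact Option.some_ne_none _ h1
  set φ := fun α => (f (α, α)).1 with hφ
  have hdiag : ∀ α : Λ, (f (α, α)).2 = φ α := fun α => key α α α
  have hfab : ∀ α β : Λ, f (α, β) = (φ α, φ β) := by
    intro α β
    have h1 := key α α β  -- (f (α,α)).2 = (f (α,β)).1
    have h2 := key α β β  -- (f (α,β)).2 = (f (β,β)).1
    have h3 : f (α, β) = ((f (α, β)).1, (f (α, β)).2) := rfl
    rw [h3, ← h1, hdiag α, h2]
  have hφinj : Function.Injective φ := by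
    intro α β h
    have : f (α, α) = f (β, β) := by rw [hfab, hfab, h]
    exact ((Prod.mk.injEq _ _ _ _).mp (hfinj this)).1
  have hφsurj : Function.Surjective φ := by
    intro γ
    obtain ⟨x, hx⟩ := hsurj (some (γ, γ))
    cases x with
    | none =>
        exfalso
        rw [hnone0, h0] at hx
        exact Option.some_ne_none _ hx.symm
    | some p =>
        obtain ⟨α, β⟩ := p
        rw [hf, hfab] at hx
        exact ⟨α, ((Prod.mk.injEq _ _ _ _).mp (Option.some_injective _ hx)).1⟩
  refine ⟨Equiv.ofBijective φ ⟨hφinj, hφsurj⟩, fun α β => ?_, h0⟩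
  rw [hf, hfab]
  rfl
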